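/- arXiv:2206.09563 — 9 statements merged into one kernel-verified Lean document; each statement's English description precedes it below -/
import Mathlib

section
/- Let N be a finite ground set, let f : 2^N → ℝ be non-negative, monotone and submodular, and let k ≥ 1 be an integer. Let S, O ⊆ N with |O| ≤ k, and suppose that for every o ∈ O \ S there exists a subset S_o ⊆ S such that Δ(o|S_o) < f(S_o)/k. Then f(O) ≤ 2 f(S). -/
/-- A set function `f` on finite subsets of `α` is submodular if for all `A ⊆ B` and
`x ∉ B`, the marginal gain of `x` to `A` is at least the marginal gain of `x` to `B`. -/
def Submodular {α : Type*} [DecidableEq α] (f : Finset α → ℝ) : Prop :=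
  ∀ A B : Finset α, A ⊆ B → ∀ x ∉ B, f (insert x A) - f A ≥ f (insert x B) - f B

lemma union_bound {α : Type*} [DecidableEq α] (f : Finset α → ℝ)
    (hsub : Submodular f) (S : Finset α) :
    ∀ T : Finset α, f (S ∪ T) ≤ f S + ∑ o ∈ T \ S, (f (insert o S) - f S) := by
  intro T
  induction T using Finset.induction_on with
  | empty => simp
  | @insert a T ha ih =>
    by_cases haS : a ∈ S
    · have h1 : S ∪ insert a T = S ∪ T := by
        rw [Finset.union_insert, Finset.insert_eq_self.mpr (Finset.mem_union_left _ haS)]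
      have h2 : insert a T \ S = T \ S := Finset.insert_sdiff_of_mem T haS
      rw [h1, h2]; exact ih
    · have h2 : insert a T \ S = insert a (T \ S) :=
        Finset.insert_sdiff_of_notMem T haS
      have haTS : a ∉ T \ S := by simp [ha]
      rw [h2, Finset.sum_insert haTS]
      have h3 : S ∪ insert a T = insert a (S ∪ T) := Finset.union_insert a S T
      have h4 : a ∉ S ∪ T := by simp [ha, haS]
      have := hsub S (S ∪ T) Finset.subset_union_left a h4
      rw [h3]
      linarith

/-- Let `f` be non-negative, monotone and submodular, `k ≥ 1`, and
`S, O` sets with `|O| ≤ k`. If every `o ∈ O \ S` admits a subset `S_o ⊆ S` with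
`Δ(o | S_o) < f(S_o)/k`, then `f(O) ≤ 2 f(S)`. -/
theorem stmt1 {α : Type*} [DecidableEq α] (f : Finset α → ℝ)
    (hnn : ∀ A : Finset α, 0 ≤ f A)
    (hmono : ∀ A B : Finset α, A ⊆ B → f A ≤ f B)
    (hsub : Submodular f)
    (k : ℕ) (hk : 1 ≤ k)
    (S O : Finset α) (hO : O.card ≤ k)
    (h : ∀ o ∈ O \ S, ∃ So ⊆ S, f (insert o So) - f So < f So / k) :
    f O ≤ 2 * f S := by
  have hOU : f O ≤ f (S ∪ O) := hmono _ _ Finset.subset_union_right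
  have hU := union_bound f hsub S O
  have hsum : ∑ o ∈ O \ S, (f (insert o S) - f S) ≤ ∑ _o ∈ O \ S, f S / k := by
    apply Finset.sum_le_sum
    intro o ho
    obtain ⟨So, hSoS, hlt⟩ := h o ho
    have hoS : o ∉ S := (Finset.mem_sdiff.mp ho).2
    have := hsub So S hSoS o hoS
    have hk0' : (0:ℝ) < k := by exact_mod_cast hk
    have hfk : f So / k ≤ f S / k := by
      gcongr
      exact hmono _ _ hSoS
    linarith
  have hcard : ((O \ S).card : ℝ) ≤ k := by
    exact_mod_cast le_trans (Finset.card_le_card (Finset.sdiff_subset)) hO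
  have hk0 : (0:ℝ) < k := by exact_mod_cast hk
  have hfS : 0 ≤ f S / k := div_nonneg (hnn S) (le_of_lt hk0)
  have : ∑ _o ∈ O \ S, f S / k = ((O \ S).card : ℝ) * (f S / k) := by
    rw [Finset.sum_const, nsmul_eq_mul]
  have hsum2 : ∑ _o ∈ O \ S, f S / k ≤ k * (f S / k) := by
    rw [this]
    exact mul_le_mul_of_nonneg_right hcard hfS
  have hkfs : (k:ℝ) * (f S / k) = f S := by field_simp
  linarith
end

section
/- Let N be a finite ground set, let f : 2^N → ℝ be non-negative and submodular, and let k ≥ 1 be an integer. Suppose S_0 ⊆ S_1 ⊆ … ⊆ S_k = S is a chain of subsets of N such that for each 0 ≤ i < k, S_{i+1} = S_i ∪ {x_{i+1}} for some x_{i+1} ∉ S_i satisfying f(S_{i+1}) − f(S_i) ≥ f(S_i)/k. Let S' = S \ S_0 (the k elements added along the chain). Then f(S_0) ≤ f(S)/2 and f(S') ≥ f(S) − f(S_0) ≥ f(S)/2. -/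
/-- Let `f` be non-negative and submodular, `k ≥ 1`, and let
`S 0 ⊆ S 1 ⊆ … ⊆ S k` be a chain where each step adds a single new element whose
gain is at least `f(S i)/k`. With `S' = S k \ S 0`, we have `f(S 0) ≤ f(S k)/2` and
`f(S') ≥ f(S k) − f(S 0) ≥ f(S k)/2`. -/
theorem stmt2 {α : Type*} [DecidableEq α] (f : Finset α → ℝ)
    (hnn : ∀ A : Finset α, 0 ≤ f A)
    (hsub : Submodular f)
    (k : ℕ) (hk : 1 ≤ k)
    (S : ℕ → Finset α) (x : ℕ → α)
    (hstep : ∀ i < k, x (i + 1) ∉ S i ∧ S (i + 1) = insert (x (i + 1)) (S i) ∧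
      f (S (i + 1)) - f (S i) ≥ f (S i) / k) :
    f (S 0) ≤ f (S k) / 2 ∧
      f (S k \ S 0) ≥ f (S k) - f (S 0) ∧
      f (S k) - f (S 0) ≥ f (S k) / 2 := by
  have hk0 : (0:ℝ) < k := by positivity
  -- chain monotonicity
  have hchain : ∀ i, i ≤ k → S 0 ⊆ S i := by
    intro i
    induction i with
    | zero => intro _; exact subset_rfl
    | succ n ih =>
      intro hn
      obtain ⟨_, heq, _⟩ := hstep n (by omega)
      rw [heq]
      exact (ih (by omega)).trans (Finset.subset_insert _ _)
  -- growth: f (S i) ≥ (1+1/k)^i * f (S 0)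
  have hgrow : ∀ i, i ≤ k → (1 + 1/(k:ℝ))^i * f (S 0) ≤ f (S i) := by
    intro i
    induction i with
    | zero => intro _; simp
    | succ n ih =>
      intro hn
      obtain ⟨_, _, hgain⟩ := hstep n (by omega)
      have h1 : f (S n) * (1 + 1/(k:ℝ)) ≤ f (S (n+1)) := by
        have : f (S n) / k = f (S n) * (1/(k:ℝ)) := by ring
        nlinarith [hgain]
      have h2 : (1 + 1/(k:ℝ))^n * f (S 0) ≤ f (S n) := ih (by omega)
      have hpos : (0:ℝ) ≤ 1 + 1/(k:ℝ) := by positivity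
      calc (1 + 1/(k:ℝ))^(n+1) * f (S 0)
          = ((1 + 1/(k:ℝ))^n * f (S 0)) * (1 + 1/(k:ℝ)) := by ring
        _ ≤ f (S n) * (1 + 1/(k:ℝ)) := by nlinarith
        _ ≤ f (S (n+1)) := h1
  -- (1+1/k)^k ≥ 2
  have hpow : (2:ℝ) ≤ (1 + 1/(k:ℝ))^k := by
    have := one_add_mul_le_pow (a := 1/(k:ℝ)) (le_trans (by norm_num) (by positivity : (0:ℝ) ≤ 1/(k:ℝ)))  k
    have hkk : (k:ℝ) * (1/(k:ℝ)) = 1 := by field_simp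
    linarith
  have h1 : f (S 0) ≤ f (S k) / 2 := by
    have := hgrow k le_rfl
    nlinarith [hnn (S 0)]
  -- second part: f (S i \ S 0) ≥ f (S i) - f (S 0)
  have hdiff : ∀ i, i ≤ k → f (S i) - f (S 0) ≤ f (S i \ S 0) := by
    intro i
    induction i with
    | zero => intro _; simpa using hnn (S 0 \ S 0)
    | succ n ih =>
      intro hn
      obtain ⟨hx, heq, _⟩ := hstep n (by omega)
      have hxs0 : x (n+1) ∉ S 0 := fun h => hx (hchain n (by omega) h)
      have hsubm := hsub (S n \ S 0) (S n) (Finset.sdiff_subset) (x (n+1)) hx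
      have hins : S (n+1) \ S 0 = insert (x (n+1)) (S n \ S 0) := by
        rw [heq, Finset.insert_sdiff_of_notMem _ hxs0]
      rw [hins, heq] at *
      have := ih (by omega)
      linarith [hsubm]
  have h2 := hdiff k le_rfl
  exact ⟨h1, h2, by linarith⟩
end

section
/- Let N be a finite ground set with |N| = n ≥ 2, let f : 2^N → ℝ be monotone and submodular with f(∅) = 0 and f(N) > 0, and let k ≥ 1 be an integer. Let a ∈ N be an element maximizing f({x}) over x ∈ N. Suppose S_0 = {a} ⊆ S_1 ⊆ … ⊆ S_r is a chain of subsets of N such that for each 0 ≤ i < r, S_{i+1} = S_i ∪ {x_{i+1}} for some x_{i+1} ∉ S_i satisfying f(S_{i+1}) − f(S_i) ≥ f(S_i)/k. Then r ≤ log(n)/log(1 + 1/k) ≤ (k+1)·log(n), where log denotes the natural logarithm; in particular |S_r| ≤ (k+1)·log(n) + 1. -/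
/-- Let the ground set have `n ≥ 2` elements, `f` monotone and
submodular with `f ∅ = 0` and `f N > 0`, `k ≥ 1`, and `a` a maximizer of the singleton
value. If `S 0 = {a} ⊆ S 1 ⊆ … ⊆ S r` is a chain where each step adds a single new
element with gain at least `f(S i)/k`, then
`r ≤ log n / log(1 + 1/k) ≤ (k+1)·log n` (natural logarithm), and in particular
`|S r| ≤ (k+1)·log n + 1`. -/
theorem stmt4 {α : Type*} [Fintype α] [DecidableEq α] (f : Finset α → ℝ)
    (hmono : ∀ A B : Finset α, A ⊆ B → f A ≤ f B)
    (hsub : Submodular f)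
    (hempty : f ∅ = 0) (hpos : 0 < f (Finset.univ : Finset α))
    (n : ℕ) (hn : n = Fintype.card α) (hn2 : 2 ≤ n)
    (k : ℕ) (hk : 1 ≤ k)
    (a : α) (ha : ∀ x : α, f {x} ≤ f {a})
    (r : ℕ) (S : ℕ → Finset α) (x : ℕ → α) (hS0 : S 0 = {a})
    (hstep : ∀ i < r, x (i + 1) ∉ S i ∧ S (i + 1) = insert (x (i + 1)) (S i) ∧
      f (S (i + 1)) - f (S i) ≥ f (S i) / k) :
    (r : ℝ) ≤ Real.log n / Real.log (1 + 1 / (k : ℝ)) ∧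
      Real.log n / Real.log (1 + 1 / (k : ℝ)) ≤ ((k : ℝ) + 1) * Real.log n ∧
      ((S r).card : ℝ) ≤ ((k : ℝ) + 1) * Real.log n + 1 := by
  have hk1 : (1:ℝ) ≤ (k:ℝ) := by exact_mod_cast hk
  have hkpos : (0:ℝ) < (k:ℝ) := by linarith
  -- bound f T by card T * f {a}
  have hbound : ∀ T : Finset α, f T ≤ T.card * f {a} := by
    intro T
    induction T using Finset.induction_on with
    | empty => simp [hempty]
    | @insert y T hy ih =>
      have h1 := hsub ∅ T (Finset.empty_subset T) y hy
      have h2 : f {y} ≤ f {a} := ha y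
      have h3 : f (insert y ∅) - f ∅ = f {y} := by simp [hempty]
      rw [Finset.card_insert_of_notMem hy]
      push_cast
      have := h1
      rw [h3] at this
      nlinarith
  have hnR : (2:ℝ) ≤ (n:ℝ) := by exact_mod_cast hn2
  have hcardn : ((Finset.univ : Finset α).card : ℝ) = (n:ℝ) := by
    rw [Finset.card_univ]; exact_mod_cast hn.symm
  have hfa_pos : 0 < f {a} := by
    have h := hbound Finset.univ
    rw [hcardn] at h
    nlinarith
  -- exponential growth
  have hb1 : (1:ℝ) < 1 + 1/(k:ℝ) := by
    have : 0 < 1/(k:ℝ) := by positivity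
    linarith
  have hgrow : ∀ i ≤ r, (1 + 1/(k:ℝ))^i * f {a} ≤ f (S i) := by
    intro i hi
    induction i with
    | zero => simp [hS0]
    | succ j ih =>
      have hj : j < r := Nat.lt_of_succ_le hi
      obtain ⟨_, _, hgain⟩ := hstep j hj
      have ihj := ih (le_of_lt hj)
      have hfk : f (S j) / k = f (S j) * (1/(k:ℝ)) := by ring
      rw [hfk] at hgain
      have hpow : (0:ℝ) < (1 + 1/(k:ℝ))^j := by positivity
      have hfsj : 0 < f (S j) := lt_of_lt_of_le (by positivity) ihj
      have : (1 + 1/(k:ℝ))^(j+1) * f {a} = ((1 + 1/(k:ℝ))^j * f {a}) * (1 + 1/(k:ℝ)) := by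
        ring
      rw [this]
      nlinarith
  -- (1+1/k)^r ≤ n
  have hpowle : (1 + 1/(k:ℝ))^r ≤ (n:ℝ) := by
    have h1 := hgrow r le_rfl
    have h2 : f (S r) ≤ f Finset.univ := hmono _ _ (Finset.subset_univ _)
    have h3 := hbound Finset.univ
    rw [hcardn] at h3
    have := h1.trans (h2.trans h3)
    exact le_of_mul_le_mul_right this hfa_pos
  have hlogb : 0 < Real.log (1 + 1/(k:ℝ)) := Real.log_pos hb1
  have hlogn : 0 ≤ Real.log (n:ℝ) := Real.log_nonneg (by linarith)
  have hrlog : (r:ℝ) * Real.log (1 + 1/(k:ℝ)) ≤ Real.log (n:ℝ) := by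
    have := Real.log_le_log (by positivity) hpowle
    rwa [Real.log_pow] at this
  have hgoal1 : (r:ℝ) ≤ Real.log n / Real.log (1 + 1/(k:ℝ)) :=
    (le_div_iff₀ hlogb).mpr hrlog
  -- log(1+1/k) ≥ 1/(k+1)
  have hL : 1/((k:ℝ)+1) ≤ Real.log (1 + 1/(k:ℝ)) := by
    rw [Real.le_log_iff_exp_le (by linarith)]
    have h1 := Real.add_one_le_exp (-(1/((k:ℝ)+1)))
    have h2 : (0:ℝ) < 1 - 1/((k:ℝ)+1) := by
      rw [sub_pos, div_lt_one (by linarith)]; linarith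
    rw [Real.exp_neg] at h1
    have hexp : 0 < Real.exp (1/((k:ℝ)+1)) := Real.exp_pos _
    have h3 : Real.exp (1/((k:ℝ)+1)) * (1 - 1/((k:ℝ)+1)) ≤ 1 := by
      have := mul_le_mul_of_nonneg_left h1 hexp.le
      rw [mul_inv_cancel₀ hexp.ne'] at this
      linarith [this]
    have h4 : 1 + 1/(k:ℝ) = 1 / (1 - 1/((k:ℝ)+1)) := by
      field_simp
      rw [add_sub_cancel_right, div_self hkpos.ne']
    rw [h4, le_div_iff₀ h2]
    linarith
  have hgoal2 : Real.log n / Real.log (1 + 1/(k:ℝ)) ≤ ((k:ℝ)+1) * Real.log n := by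
    rw [div_le_iff₀ hlogb]
    have : 1 ≤ ((k:ℝ)+1) * Real.log (1 + 1/(k:ℝ)) := by
      have := mul_le_mul_of_nonneg_left hL (by linarith : (0:ℝ) ≤ (k:ℝ)+1)
      rw [mul_one_div, div_self (by linarith : (k:ℝ)+1 ≠ 0)] at this
      linarith
    nlinarith
  have hcard : ∀ i ≤ r, (S i).card = i + 1 := by
    intro i hi
    induction i with
    | zero => simp [hS0]
    | succ j ih =>
      have hj : j < r := Nat.lt_of_succ_le hi
      obtain ⟨hx, hins, _⟩ := hstep j hj
      rw [hins, Finset.card_insert_of_notMem hx, ih (le_of_lt hj)]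
  refine ⟨hgoal1, hgoal2, ?_⟩
  rw [hcard r le_rfl]
  push_cast
  linarith
end

section
/- Fix a finite ground set N, an injective list L = (e_1, …, e_n) enumerating N, a set function f : 2^N → ℝ, and an integer k ≥ 1. For a nonempty subset X ⊆ N, define LTC(X) as follows: let a be the first element of L among those x ∈ X attaining the maximum of f({x}) over X; initialize S = {a}; then process the elements of L in order, and for each element x with x ∈ X, update S ← S ∪ {x} if f(S ∪ {x}) − f(S) ≥ f(S)/k; output the final S. Then LTC satisfies the randomized consistency property for this fixed order: if A and B are disjoint subsets of N with A nonempty, and for every b ∈ B it holds that LTC(A ∪ {b}) = LTC(A), then LTC(A ∪ B) = LTC(A). -/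
open scoped Classical in
/-- The `LinearTimeCardinality` (LTC) procedure, for a fixed order `L` of the ground set.
For a nonempty `X`, it starts from the first element of `L` among the `X`-maximizers of
the singleton value, then scans `L` in order and adds each `x ∈ X` whose marginal gain
to the current solution `S` is at least `f(S)/k`. -/
noncomputable def LTC {α : Type*} [DecidableEq α] (L : List α) (f : Finset α → ℝ) (k : ℕ)
    (X : Finset α) : Finset α :=
  let S0 : Finset α :=
    match L.find? (fun x => decide (x ∈ X ∧ ∀ y ∈ X, f {y} ≤ f {x})) with
    | some a => {a}
    | none => ∅
  L.foldl (fun S x => if x ∈ X ∧ f S / k ≤ f (insert x S) - f S then insert x S else S) S0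

open scoped Classical

section Aux

variable {α : Type*} [DecidableEq α] (f : Finset α → ℝ) (k : ℕ)

/-- The single scan step of `LTC`. -/
noncomputable def LTCstep (X : Finset α) (S : Finset α) (x : α) : Finset α :=
  if x ∈ X ∧ f S / k ≤ f (insert x S) - f S then insert x S else S

/-- The selection predicate of `LTC`. -/
noncomputable def LTCpred (X : Finset α) : α → Bool :=
  fun x => decide (x ∈ X ∧ ∀ y ∈ X, f {y} ≤ f {x})

/-- The initial solution of `LTC`. -/
noncomputable def LTCinit (L : List α) (X : Finset α) : Finset α :=
  match L.find? (LTCpred f X) with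
  | some a => {a}
  | none => ∅

lemma LTC_eq (L : List α) (X : Finset α) :
    LTC L f k X = L.foldl (LTCstep f k X) (LTCinit f L X) := rfl

lemma LTCpred_iff (X : Finset α) (x : α) :
    LTCpred f X x = true ↔ (x ∈ X ∧ ∀ y ∈ X, f {y} ≤ f {x}) := by
  simp [LTCpred]

lemma LTCinit_of_find {L : List α} {X : Finset α} {a : α}
    (h : L.find? (LTCpred f X) = some a) : LTCinit f L X = {a} := by
  unfold LTCinit
  rw [h]

lemma subset_foldl (X : Finset α) : ∀ (ℓ : List α) (S : Finset α),
    S ⊆ ℓ.foldl (LTCstep f k X) S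
  | [], S => subset_rfl
  | x :: t, S => by
    rw [List.foldl_cons]
    refine subset_trans ?_ (subset_foldl X t _)
    unfold LTCstep
    split
    · exact Finset.subset_insert _ _
    · exact subset_rfl

lemma foldl_subset (X Y : Finset α) (hXY : X ⊆ Y) : ∀ (ℓ : List α) (S : Finset α),
    S ⊆ Y → ℓ.foldl (LTCstep f k X) S ⊆ Y
  | [], _, hS => hS
  | x :: t, S, hS => by
    rw [List.foldl_cons]
    apply foldl_subset X Y hXY t
    unfold LTCstep
    split
    · next h => exact Finset.insert_subset (hXY h.1) hS
    · exact hS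

/-- If `a` is the first element of `l` satisfying `p`, `a'` is the first satisfying `q`,
and moreover `p a'` and `q a` both hold, then `a = a'`. -/
lemma find?_agree (p q : α → Bool) : ∀ (l : List α) {a a' : α},
    l.find? p = some a → l.find? q = some a' → p a' = true → q a = true → a = a' := by
  intro l
  induction l with
  | nil => intro a a' h1 _ _ _; simp at h1
  | cons x t ih =>
    intro a a' h1 h2 hpa' hqa
    cases hpx : p x with
    | true =>
      rw [List.find?_cons_of_pos (l := t) hpx] at h1
      injection h1 with h1
      subst h1
      cases hqx : q x with
      | true =>
        rw [List.find?_cons_of_pos (l := t) hqx] at h2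
        injection h2 with h2
      | false => simp [hqx] at hqa
    | false =>
      rw [List.find?_cons_of_neg (l := t) (p := p) (a := x) (by simp [hpx])] at h1
      cases hqx : q x with
      | true =>
        rw [List.find?_cons_of_pos (l := t) hqx] at h2
        injection h2 with h2
        subst h2
        simp [hpx] at hpa'
      | false =>
        rw [List.find?_cons_of_neg (l := t) (p := q) (a := x) (by simp [hqx])] at h2
        exact ih h1 h2 hpa' hqa

end Aux

/-- For a fixed injective list `L` enumerating the ground set, the
procedure `LTC` satisfies the randomized consistency property: if `A` and `B` are
disjoint with `A` nonempty and `LTC(A ∪ {b}) = LTC(A)` for every `b ∈ B`, then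
`LTC(A ∪ B) = LTC(A)`. -/
theorem stmt5 {α : Type*} [Fintype α] [DecidableEq α] (L : List α)
    (hnd : L.Nodup) (hall : ∀ x : α, x ∈ L)
    (f : Finset α → ℝ) (k : ℕ) (hk : 1 ≤ k)
    (A B : Finset α) (hdisj : Disjoint A B) (hA : A.Nonempty)
    (hB : ∀ b ∈ B, LTC L f k (insert b A) = LTC L f k A) :
    LTC L f k (A ∪ B) = LTC L f k A := by
  have hfind : ∀ X : Finset α, X.Nonempty → ∃ a, L.find? (LTCpred f X) = some a := by
    intro X hX
    obtain ⟨m, hm, hmax⟩ := X.exists_max_image (fun x => f {x}) hX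
    have h : (L.find? (LTCpred f X)).isSome :=
      List.find?_isSome.mpr ⟨m, hall m, (LTCpred_iff f X m).mpr ⟨hm, hmax⟩⟩
    exact Option.isSome_iff_exists.mp h
  obtain ⟨a₀, ha₀⟩ := hfind A hA
  have hPa₀ : a₀ ∈ A ∧ ∀ y ∈ A, f {y} ≤ f {a₀} := by
    have h := List.find?_some ha₀
    exact (LTCpred_iff f A a₀).mp h
  have hinitA : LTCinit f L A = {a₀} := LTCinit_of_find f ha₀
  -- `LTC X ⊆ X`
  have hsub : ∀ X : Finset α, LTC L f k X ⊆ X := by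
    intro X
    rw [LTC_eq]
    apply foldl_subset f k X X subset_rfl L
    unfold LTCinit
    cases hfx : L.find? (LTCpred f X) with
    | none => simp
    | some a =>
      rw [Finset.singleton_subset_iff]
      have h := List.find?_some hfx
      exact ((LTCpred_iff f X a).mp h).1
  -- key facts for each `b ∈ B`
  have hbkey : ∀ b ∈ B,
      (L.find? (LTCpred f (insert b A)) = some a₀) ∧ f {b} ≤ f {a₀} := by
    intro b hb
    obtain ⟨a₁, ha₁⟩ := hfind (insert b A) ⟨b, Finset.mem_insert_self b A⟩
    have hPa₁ : a₁ ∈ insert b A ∧ ∀ y ∈ insert b A, f {y} ≤ f {a₁} := by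
      have h := List.find?_some ha₁
      exact (LTCpred_iff f _ a₁).mp h
    have ha₁A : a₁ ∈ A := by
      have h1 : a₁ ∈ LTC L f k (insert b A) := by
        rw [LTC_eq, LTCinit_of_find f ha₁]
        exact subset_foldl f k (insert b A) L {a₁} (Finset.mem_singleton_self a₁)
      rw [hB b hb] at h1
      exact hsub A h1
    have hba₁ : f {b} ≤ f {a₁} := hPa₁.2 b (Finset.mem_insert_self b A)
    have ha₁a₀ : f {a₁} ≤ f {a₀} := hPa₀.2 a₁ ha₁A
    have hPa₀b : a₀ ∈ insert b A ∧ ∀ y ∈ insert b A, f {y} ≤ f {a₀} := by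
      refine ⟨Finset.mem_insert_of_mem hPa₀.1, ?_⟩
      intro y hy
      rcases Finset.mem_insert.mp hy with rfl | hy
      · exact le_trans hba₁ ha₁a₀
      · exact hPa₀.2 y hy
    have heq : a₁ = a₀ :=
      find?_agree _ _ L ha₁ ha₀ ((LTCpred_iff f _ a₀).mpr hPa₀b)
        ((LTCpred_iff f A a₁).mpr ⟨ha₁A, fun y hy => hPa₁.2 y (Finset.mem_insert_of_mem hy)⟩)
    exact ⟨heq ▸ ha₁, le_trans hba₁ (heq ▸ ha₁a₀)⟩
  -- the initial solution for `A ∪ B` is also `{a₀}`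
  have hPa₀AB : a₀ ∈ A ∪ B ∧ ∀ y ∈ A ∪ B, f {y} ≤ f {a₀} := by
    refine ⟨Finset.mem_union_left _ hPa₀.1, fun y hy => ?_⟩
    rcases Finset.mem_union.mp hy with h | h
    · exact hPa₀.2 y h
    · exact (hbkey y h).2
  obtain ⟨a₂, ha₂⟩ := hfind (A ∪ B) ⟨hA.choose, Finset.mem_union_left _ hA.choose_spec⟩
  have hPa₂ : a₂ ∈ A ∪ B ∧ ∀ y ∈ A ∪ B, f {y} ≤ f {a₂} := by
    have h := List.find?_some ha₂
    exact (LTCpred_iff f _ a₂).mp h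
  have ha₂eq : a₂ = a₀ := by
    rcases Finset.mem_union.mp hPa₂.1 with h | h
    · exact find?_agree _ _ L ha₂ ha₀ ((LTCpred_iff f _ a₀).mpr hPa₀AB)
        ((LTCpred_iff f A a₂).mpr ⟨h, fun y hy => hPa₂.2 y (Finset.mem_union_left _ hy)⟩)
    · refine find?_agree _ _ L ha₂ ((hbkey a₂ h).1) ((LTCpred_iff f _ a₀).mpr hPa₀AB)
        ((LTCpred_iff f _ a₂).mpr ⟨Finset.mem_insert_self _ _, fun y hy => hPa₂.2 y ?_⟩)
      rcases Finset.mem_insert.mp hy with rfl | hy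
      · exact Finset.mem_union_right _ h
      · exact Finset.mem_union_left _ hy
  rw [ha₂eq] at ha₂
  -- each `b ∈ B` is rejected against the run of `LTC` on `A`
  have hrej : ∀ b ∈ B, ∀ ℓ₁ ℓ₂ : List α, L = ℓ₁ ++ b :: ℓ₂ →
      ¬ (f (ℓ₁.foldl (LTCstep f k A) {a₀}) / k ≤
         f (insert b (ℓ₁.foldl (LTCstep f k A) {a₀})) - f (ℓ₁.foldl (LTCstep f k A) {a₀})) := by
    intro b hb ℓ₁ ℓ₂ hL hth
    subst hL
    have hbn : b ∉ ℓ₁ := fun hmem =>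
      (List.disjoint_of_nodup_append hnd) hmem ((List.mem_cons_self (a := b) (l := ℓ₂)))
    have hagree : List.foldl (LTCstep f k (insert b A)) {a₀} ℓ₁ =
        List.foldl (LTCstep f k A) {a₀} ℓ₁ := by
      refine List.foldl_ext _ _ _ (fun S x hx => ?_)
      unfold LTCstep
      have hxb : (x ∈ insert b A) ↔ x ∈ A := by
        rw [Finset.mem_insert]
        constructor
        · rintro (rfl | h)
          · exact absurd hx hbn
          · exact h
        · exact Or.inr
      simp only [hxb]
    set S := List.foldl (LTCstep f k A) {a₀} ℓ₁ with hS
    have hstepb : LTCstep f k (insert b A) S b = insert b S := by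
      unfold LTCstep
      rw [if_pos ⟨Finset.mem_insert_self b A, hth⟩]
    have hbin : b ∈ LTC (ℓ₁ ++ b :: ℓ₂) f k (insert b A) := by
      rw [LTC_eq, LTCinit_of_find f (hbkey b hb).1, List.foldl_append, List.foldl_cons,
        hagree, hstepb]
      exact subset_foldl f k (insert b A) ℓ₂ (insert b S) (Finset.mem_insert_self b S)
    rw [hB b hb] at hbin
    exact (Finset.disjoint_left.mp hdisj) (hsub A hbin) hb
  -- main induction: the scans on `A ∪ B` and `A` coincide
  have main : ∀ ℓ₂ ℓ₁ : List α, L = ℓ₁ ++ ℓ₂ →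
      ℓ₂.foldl (LTCstep f k (A ∪ B)) (ℓ₁.foldl (LTCstep f k A) {a₀}) =
        L.foldl (LTCstep f k A) {a₀} := by
    intro ℓ₂
    induction ℓ₂ with
    | nil =>
      intro ℓ₁ hL
      rw [List.foldl_nil, hL, List.append_nil]
    | cons x t ih =>
      intro ℓ₁ hL
      rw [List.foldl_cons]
      set S := List.foldl (LTCstep f k A) {a₀} ℓ₁ with hS
      have hstep : LTCstep f k (A ∪ B) S x = LTCstep f k A S x := by
        by_cases hx : x ∈ A
        · unfold LTCstep
          have hxu : (x ∈ A ∪ B) ↔ x ∈ A := by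
            simp [Finset.mem_union, hx]
          simp only [hxu]
        · by_cases hxB : x ∈ B
          · have hc1 : ¬ (x ∈ A ∪ B ∧ f S / k ≤ f (insert x S) - f S) := by
              rintro ⟨-, h2⟩
              exact hrej x hxB ℓ₁ t hL h2
            have hc2 : ¬ (x ∈ A ∧ f S / k ≤ f (insert x S) - f S) := by
              rintro ⟨h1, -⟩; exact hx h1
            unfold LTCstep
            rw [if_neg hc1, if_neg hc2]
          · have hc1 : ¬ (x ∈ A ∪ B ∧ f S / k ≤ f (insert x S) - f S) := by
              rintro ⟨h1, -⟩
              rcases Finset.mem_union.mp h1 with h | h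
              exacts [hx h, hxB h]
            have hc2 : ¬ (x ∈ A ∧ f S / k ≤ f (insert x S) - f S) := by
              rintro ⟨h1, -⟩; exact hx h1
            unfold LTCstep
            rw [if_neg hc1, if_neg hc2]
      rw [hstep]
      have hconcat : LTCstep f k A S x = List.foldl (LTCstep f k A) {a₀} (ℓ₁ ++ [x]) := by
        rw [List.foldl_append, List.foldl_cons, List.foldl_nil, hS]
      rw [hconcat]
      exact ih (ℓ₁ ++ [x]) (by rw [hL, List.append_assoc]; rfl)
  have h1 := main L [] rfl
  rw [LTC_eq, LTC_eq, LTCinit_of_find f ha₂, hinitA]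
  exact h1
end

section
/- Let N be a finite ground set, let f : 2^N → ℝ be monotone and submodular, let k ≥ 1 be an integer, and let τ ≥ 0 be a real number. Let Q, T ⊆ N with |Q| ≤ k, and suppose that for every q ∈ Q \ T the marginal gain satisfies Δ(q|T) < τ. Then f(Q ∪ T) − f(T) ≤ k·τ; in particular f(Q) ≤ f(T) + k·τ. -/
lemma aux9 {α : Type*} [DecidableEq α] (f : Finset α → ℝ)
    (hsub : Submodular f) (τ : ℝ) (T : Finset α) :
    ∀ S : Finset α, (∀ x ∈ S, x ∉ T) →
      (∀ x ∈ S, f (insert x T) - f T < τ) →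
      f (S ∪ T) - f T ≤ S.card * τ := by
  intro S
  induction S using Finset.induction_on with
  | empty => intro _ _; simp
  | @insert a S ha ih =>
    intro hnT hlt
    have haT : a ∉ S ∪ T := by
      simp only [Finset.mem_union]
      rintro (h | h)
      · exact ha h
      · exact hnT a (Finset.mem_insert_self a S) h
    have h1 : f (insert a (S ∪ T)) - f (S ∪ T) ≤ f (insert a T) - f T :=
      hsub T (S ∪ T) Finset.subset_union_right a haT
    have h2 := ih (fun x hx => hnT x (Finset.mem_insert_of_mem hx))
      (fun x hx => hlt x (Finset.mem_insert_of_mem hx))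
    have h3 := hlt a (Finset.mem_insert_self a S)
    have hcard : (insert a S).card = S.card + 1 := Finset.card_insert_of_notMem ha
    have : f (insert a S ∪ T) = f (insert a (S ∪ T)) := by rw [Finset.insert_union]
    rw [this, hcard]
    push_cast
    nlinarith

/-- Let `f` be monotone and submodular, `k ≥ 1`, `τ ≥ 0`, and
`Q, T` with `|Q| ≤ k`. If every `q ∈ Q \ T` has marginal gain `Δ(q|T) < τ`, then
`f(Q ∪ T) − f(T) ≤ k·τ`; in particular `f(Q) ≤ f(T) + k·τ`. -/
theorem stmt9 {α : Type*} [DecidableEq α] (f : Finset α → ℝ)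
    (hmono : ∀ A B : Finset α, A ⊆ B → f A ≤ f B)
    (hsub : Submodular f)
    (k : ℕ) (hk : 1 ≤ k) (τ : ℝ) (hτ : 0 ≤ τ)
    (Q T : Finset α) (hQ : Q.card ≤ k)
    (h : ∀ q ∈ Q \ T, f (insert q T) - f T < τ) :
    f (Q ∪ T) - f T ≤ k * τ ∧ f Q ≤ f T + k * τ := by
  have hUnion : Q ∪ T = (Q \ T) ∪ T := by
    rw [Finset.sdiff_union_self_eq_union]
  have hcard : (Q \ T).card ≤ k := le_trans (Finset.card_le_card (Finset.sdiff_subset)) hQ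
  have key := aux9 f hsub τ T (Q \ T)
    (fun x hx => (Finset.mem_sdiff.mp hx).2) h
  have h1 : f (Q ∪ T) - f T ≤ k * τ := by
    rw [hUnion]
    calc f ((Q \ T) ∪ T) - f T ≤ (Q \ T).card * τ := key
      _ ≤ k * τ := by
          apply mul_le_mul_of_nonneg_right _ hτ
          exact_mod_cast hcard
  refine ⟨h1, ?_⟩
  have : f Q ≤ f (Q ∪ T) := hmono _ _ Finset.subset_union_left
  linarith
end

section
/- Let N be a finite ground set, let f : 2^N → ℝ be non-negative, monotone and submodular with f(∅) = 0, let k ≥ 1 be an integer, let ε ∈ (0, 1) and α ∈ (0, 1], and let O ⊆ N with |O| ≤ k. Let Γ be a real number with Γ ≤ f(O) ≤ Γ/α, and define thresholds τ_j = (Γ/(αk))·(1 − ε)^{j−1} for j = 1, …, J. Suppose ∅ = S_0 ⊆ S_1 ⊆ … ⊆ S_J = S is a chain of subsets of N such that: (i) for every j, the elements of S_j \ S_{j−1} can be ordered so that each is added with marginal gain at least τ_j with respect to the set of all previously added elements; (ii) for every j ≥ 2 with S_j ≠ S_{j−1}, every o ∈ O \ S_{j−1} satisfies Δ(o|S_{j−1})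 < τ_{j−1}; and (iii) |S| = k. Then f(S) ≥ (1 − 1/e − ε)·f(O). -/
lemma submod_sum {α : Type*} [DecidableEq α] (f : Finset α → ℝ) (hsub : Submodular f)
    (T : Finset α) (R : Finset α) :
    f (T ∪ R) - f T ≤ ∑ o ∈ R \ T, (f (insert o T) - f T) := by
  induction R using Finset.induction_on with
  | empty => simp
  | @insert a R haR ih =>
    by_cases haT : a ∈ T
    · have h1 : T ∪ insert a R = T ∪ R := by
        rw [Finset.union_insert, Finset.insert_eq_self.mpr (Finset.mem_union_left R haT)]
      have h2 : insert a R \ T = R \ T := Finset.insert_sdiff_of_mem _ haT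
      rw [h1, h2]; exact ih
    · have haTR : a ∉ T ∪ R := by simp [haT, haR]
      have hs := hsub T (T ∪ R) Finset.subset_union_left a haTR
      have h1 : T ∪ insert a R = insert a (T ∪ R) := Finset.union_insert _ _ _
      have h2 : insert a R \ T = insert a (R \ T) := Finset.insert_sdiff_of_notMem _ haT
      have h3 : a ∉ R \ T := fun h => haR (Finset.mem_sdiff.mp h).1
      rw [h1, h2, Finset.sum_insert h3]
      linarith

/-- The ThresholdGreedy guarantee when the constraint is filled:
`f` non-negative, monotone, submodular with `f ∅ = 0`; `k ≥ 1`, `ε ∈ (0,1)`,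
`α ∈ (0,1]`, `|O| ≤ k`, `Γ ≤ f(O) ≤ Γ/α`, thresholds `τ j = (Γ/(αk))·(1−ε)^(j−1)`
for `j = 1, …, J`. The chain `∅ = S 0 ⊆ … ⊆ S J` is built so that (i) the elements of
`S j \ S (j−1)` can be ordered so that each is added with marginal gain at least `τ j`
with respect to all previously added elements; (ii) for every `j ≥ 2` with
`S j ≠ S (j−1)`, every `o ∈ O \ S (j−1)` has marginal gain below `τ (j−1)`; and
(iii) `|S J| = k`. Then `f (S J) ≥ (1 − 1/e − ε)·f(O)`. -/
theorem stmt10 {α : Type*} [DecidableEq α] (f : Finset α → ℝ)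
    (hnn : ∀ A : Finset α, 0 ≤ f A)
    (hmono : ∀ A B : Finset α, A ⊆ B → f A ≤ f B)
    (hsub : Submodular f) (hf0 : f ∅ = 0)
    (k : ℕ) (hk : 1 ≤ k)
    (ε : ℝ) (hε : 0 < ε) (hε1 : ε < 1)
    (a : ℝ) (ha : 0 < a) (ha1 : a ≤ 1)
    (O : Finset α) (hO : O.card ≤ k)
    (Γ : ℝ) (hΓ : Γ ≤ f O) (hΓ2 : f O ≤ Γ / a)
    (J : ℕ) (τ : ℕ → ℝ)
    (hτ : ∀ j, 1 ≤ j → j ≤ J → τ j = Γ / (a * k) * (1 - ε) ^ (j - 1))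
    (S : ℕ → Finset α) (hS0 : S 0 = ∅)
    (hchain : ∀ j, 1 ≤ j → j ≤ J → S (j - 1) ⊆ S j)
    (hadd : ∀ j, 1 ≤ j → j ≤ J → ∃ l : List α, l.Nodup ∧ l.toFinset = S j \ S (j - 1) ∧
      ∀ i : Fin l.length,
        τ j ≤ f (insert (l.get i) (S (j - 1) ∪ (l.take (i : ℕ)).toFinset)) -
          f (S (j - 1) ∪ (l.take (i : ℕ)).toFinset))
    (hthresh : ∀ j, 2 ≤ j → j ≤ J → S j ≠ S (j - 1) →
      ∀ o ∈ O, o ∉ S (j - 1) →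
        f (insert o (S (j - 1))) - f (S (j - 1)) < τ (j - 1))
    (hfull : (S J).card = k) :
    (1 - 1 / Real.exp 1 - ε) * f O ≤ f (S J) := by
  have hkR : (0:ℝ) < (k:ℝ) := by exact_mod_cast Nat.lt_of_lt_of_le Nat.zero_lt_one hk
  have hΓa : 0 ≤ Γ / a := le_trans (hnn O) hΓ2
  have hΓ0 : 0 ≤ Γ := by
    rcases div_nonneg_iff.mp hΓa with ⟨h1, _⟩ | ⟨_, h2⟩
    · exact h1
    · linarith
  have hε' : (0:ℝ) ≤ 1 - ε := by linarith
  have hτnn : ∀ j, 1 ≤ j → j ≤ J → 0 ≤ τ j := by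
    intro j h1 h2
    rw [hτ j h1 h2]
    positivity
  set q : ℝ := 1 - (1 - ε) / k with hqdef
  have hq0 : 0 < q := by
    have h1 : (1 - ε) / k ≤ 1 - ε := by
      apply div_le_self hε'
      exact_mod_cast hk
    simp only [hqdef]; linarith
  -- key per-step threshold bound
  have key : ∀ j, 1 ≤ j → j ≤ J → S j ≠ S (j-1) → ∀ T : Finset α, S (j-1) ⊆ T →
      (1 - ε) / k * (f O - f T) ≤ τ j := by
    intro j h1 h2 hne T hT
    have hdiv : (0:ℝ) ≤ (1-ε)/k := div_nonneg hε' hkR.le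
    rcases eq_or_lt_of_le h1 with h1' | h1' 
    · -- j = 1
      have hfT : f O - f T ≤ Γ / a := by linarith [hnn T, hΓ2]
      have hτ1 : τ j = Γ / (a*k) := by rw [hτ j h1 h2, ← h1']; simp
      have hτ1nn : 0 ≤ Γ / (a*k) := by positivity
      calc (1-ε)/k * (f O - f T) ≤ (1-ε)/k * (Γ/a) :=
            mul_le_mul_of_nonneg_left hfT hdiv
        _ = (1-ε) * (Γ/(a*k)) := by
            rw [div_mul_div_comm, mul_comm ((k:ℝ)) a]
            exact mul_div_assoc _ _ _
        _ ≤ 1 * (Γ/(a*k)) := mul_le_mul_of_nonneg_right (by linarith) hτ1nn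
        _ = τ j := by rw [hτ1, one_mul]
    · -- 2 ≤ j
      have h2j : 2 ≤ j := h1'
      have hτj1nn : 0 ≤ τ (j-1) := hτnn (j-1) (by omega) (by omega)
      have hsum := submod_sum f hsub T O
      have hbound : ∀ o ∈ O \ T, f (insert o T) - f T ≤ τ (j-1) := by
        intro o ho
        rcases Finset.mem_sdiff.mp ho with ⟨hoO, hoT⟩
        have hoS : o ∉ S (j-1) := fun h => hoT (hT h)
        have hth := hthresh j h2j h2 hne o hoO hoS
        have hsb := hsub (S (j-1)) T hT o hoT
        linarith
      have hsum2 : ∑ o ∈ O \ T, (f (insert o T) - f T) ≤ ((O \ T).card : ℝ) * τ (j-1) := by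
        calc ∑ o ∈ O \ T, (f (insert o T) - f T) ≤ ∑ _o ∈ O \ T, τ (j-1) :=
              Finset.sum_le_sum hbound
          _ = ((O \ T).card : ℝ) * τ (j-1) := by rw [Finset.sum_const, nsmul_eq_mul]
      have hcard : ((O \ T).card : ℝ) ≤ (k : ℝ) := by
        exact_mod_cast le_trans (Finset.card_le_card Finset.sdiff_subset) hO
      have hOT : f O ≤ f (T ∪ O) := hmono _ _ Finset.subset_union_right
      have hfOT : f O - f T ≤ (k:ℝ) * τ (j-1) := by
        have hm := mul_le_mul_of_nonneg_right hcard hτj1nn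
        linarith
      have hτrel : τ j = (1-ε) * τ (j-1) := by
        rw [hτ j h1 h2, hτ (j-1) (by omega) (by omega)]
        have hje : (1-ε) ^ (j-1) = (1-ε) ^ (j-1-1) * (1-ε) := by
          rw [← pow_succ]
          congr 1
          omega
        rw [hje]; ring
      calc (1-ε)/k * (f O - f T) ≤ (1-ε)/k * ((k:ℝ) * τ (j-1)) :=
            mul_le_mul_of_nonneg_left hfOT hdiv
        _ = (1-ε) * τ (j-1) := by field_simp
        _ = τ j := hτrel.symm
  -- main induction on rounds
  have hmain : ∀ j, j ≤ J → f O - f (S j) ≤ q ^ (S j).card * f O := by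
    intro j
    induction j with
    | zero =>
      intro _
      rw [hS0, hf0]
      simp
    | succ n ih =>
      intro hnJ
      have h1n : 1 ≤ n + 1 := by omega
      have hch := hchain (n+1) h1n hnJ
      simp only [Nat.add_sub_cancel] at hch
      obtain ⟨l, hnd, hlf, hgain⟩ := hadd (n+1) h1n hnJ
      simp only [Nat.add_sub_cancel] at hlf hgain
      have hSn1 : S n ∪ l.toFinset = S (n+1) := by
        rw [hlf]; exact Finset.union_sdiff_of_subset hch
      have inner : ∀ i, i ≤ l.length →
          f O - f (S n ∪ (l.take i).toFinset) ≤ q ^ i * (f O - f (S n)) := by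
        intro i
        induction i with
        | zero => intro _; simp
        | succ m ihm =>
          intro hm
          have hmlt : m < l.length := by omega
          have hx := hgain ⟨m, hmlt⟩
          simp only at hx
          set x := l.get ⟨m, hmlt⟩ with hxdef
          set T := S n ∪ (l.take m).toFinset with hTdef
          have htake : l.take (m+1) = l.take m ++ [x] := by
            rw [List.take_succ]
            simp [List.getElem?_eq_getElem hmlt, hxdef, List.get_eq_getElem]
          have hins : S n ∪ (l.take (m+1)).toFinset = insert x T := by
            ext y
            simp only [htake, hTdef, List.toFinset_append, List.toFinset_cons,
              List.toFinset_nil, Finset.mem_union, Finset.mem_insert,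
              List.mem_toFinset, Finset.notMem_empty, or_false,
              Finset.insert_empty, Finset.mem_singleton]
            tauto
          have hneq : S (n+1) ≠ S n := by
            intro h
            have he : l.toFinset = ∅ := by rw [hlf, h]; simp
            rw [List.toFinset_eq_empty_iff] at he
            rw [he] at hmlt
            simp at hmlt
          have hkey := key (n+1) h1n hnJ (by simpa using hneq) T
            (by rw [hTdef]; exact Finset.subset_union_left)
          have step : f O - f (insert x T) ≤ q * (f O - f T) := by
            have : q * (f O - f T) = (f O - f T) - (1-ε)/k * (f O - f T) := by
              rw [hqdef]; ring
            rw [this]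
            linarith
          calc f O - f (S n ∪ (l.take (m+1)).toFinset) = f O - f (insert x T) := by rw [hins]
            _ ≤ q * (f O - f T) := step
            _ ≤ q * (q^m * (f O - f (S n))) :=
                mul_le_mul_of_nonneg_left (ihm (by omega)) hq0.le
            _ = q^(m+1) * (f O - f (S n)) := by ring
      have hlast := inner l.length le_rfl
      rw [List.take_length, hSn1] at hlast
      have hcard : (S (n+1)).card = l.length + (S n).card := by
        have hc := Finset.card_sdiff_add_card_eq_card hch
        rw [← hlf] at hc
        have hlen := List.toFinset_card_of_nodup hnd
        omega
      have ihn := ih (by omega)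
      calc f O - f (S (n+1)) ≤ q^l.length * (f O - f (S n)) := hlast
        _ ≤ q^l.length * (q^(S n).card * f O) :=
            mul_le_mul_of_nonneg_left ihn (pow_nonneg hq0.le _)
        _ = q^(S (n+1)).card * f O := by rw [hcard, pow_add]; ring
  have hfin := hmain J le_rfl
  rw [hfull] at hfin
  -- q^k ≤ 1/e + ε
  have hqexp : q ≤ Real.exp (-(1-ε)/k) := by
    have h := Real.add_one_le_exp (-(1-ε)/k)
    have : q = -(1-ε)/k + 1 := by rw [hqdef]; ring
    linarith
  have hqk : q ^ k ≤ Real.exp (-(1-ε)) := by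
    calc q ^ k ≤ (Real.exp (-(1-ε)/k)) ^ k := pow_le_pow_left₀ hq0.le hqexp k
      _ = Real.exp ((k:ℝ) * (-(1-ε)/k)) := (Real.exp_nat_mul _ k).symm
      _ = Real.exp (-(1-ε)) := by congr 1; field_simp
  have hexpε : Real.exp ε ≤ 1 - ε + ε * Real.exp 1 := by
    have hcvx := convexOn_exp.2 (Set.mem_univ (0:ℝ)) (Set.mem_univ (1:ℝ))
      hε' hε.le (by ring)
    simpa using hcvx
  have he1 : 0 < Real.exp 1 := Real.exp_pos 1
  have hq2 : q ^ k ≤ 1 / Real.exp 1 + ε := by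
    have h3 : Real.exp (-(1-ε)) = Real.exp ε / Real.exp 1 := by
      rw [← Real.exp_sub]; ring_nf
    rw [h3] at hqk
    have h4 : Real.exp ε / Real.exp 1 ≤ (1 - ε + ε * Real.exp 1) / Real.exp 1 := by
      gcongr
    have h5 : (1 - ε + ε * Real.exp 1) / Real.exp 1 ≤ 1/Real.exp 1 + ε := by
      rw [div_le_iff₀ he1, add_mul, one_div, inv_mul_cancel₀ he1.ne']
      linarith
    linarith
  have hmul := mul_le_mul_of_nonneg_right hq2 (hnn O)
  nlinarith [hfin, hmul]
end

section
/- Let ε ∈ (0, 1), let k > 0 be a real number, and let n_1, …, n_r be non-negative real numbers with Σ_{j=1}^r n_j = k. Then Π_{j=1}^r (1 − (1 − ε)·n_j/k) ≤ e^{ε − 1} ≤ 1/e + ε. -/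
/-- Let `ε ∈ (0,1)`, `k > 0` real, and `n 1, …, n r` non-negative
reals summing to `k`. Then `Π_j (1 − (1−ε)·n j / k) ≤ e^{ε−1} ≤ 1/e + ε`. -/
theorem stmt11 (ε : ℝ) (hε : 0 < ε) (hε1 : ε < 1)
    (k : ℝ) (hk : 0 < k)
    (r : ℕ) (n : ℕ → ℝ)
    (hn : ∀ j ∈ Finset.range r, 0 ≤ n j)
    (hsum : ∑ j ∈ Finset.range r, n j = k) :
    (∏ j ∈ Finset.range r, (1 - (1 - ε) * n j / k)) ≤ Real.exp (ε - 1) ∧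
      Real.exp (ε - 1) ≤ 1 / Real.exp 1 + ε := by
  constructor
  · calc (∏ j ∈ Finset.range r, (1 - (1 - ε) * n j / k))
        ≤ ∏ j ∈ Finset.range r, Real.exp (-((1 - ε) * n j / k)) := by
          apply Finset.prod_le_prod
          · intro j hj
            have hjk : n j ≤ k := by
              rw [← hsum]
              exact Finset.single_le_sum hn hj
            have : (1 - ε) * n j / k ≤ 1 - ε := by
              rw [div_le_iff₀ hk]
              nlinarith [hn j hj]
            nlinarith
          · intro j hj
            have := Real.add_one_le_exp (-((1 - ε) * n j / k))
            linarith
      _ = Real.exp (∑ j ∈ Finset.range r, -((1 - ε) * n j / k)) := by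
          rw [← Real.exp_sum]
      _ = Real.exp (ε - 1) := by
          congr 1
          have : ∑ j ∈ Finset.range r, -((1 - ε) * n j / k)
              = -((1 - ε) / k) * ∑ j ∈ Finset.range r, n j := by
            rw [Finset.mul_sum]
            exact Finset.sum_congr rfl fun j _ => by ring
          rw [this, hsum]
          field_simp
          ring
  · have hconv := convexOn_exp.2 (Set.mem_univ (-1 : ℝ)) (Set.mem_univ (0 : ℝ))
      (by linarith : (0:ℝ) ≤ 1 - ε) (le_of_lt hε) (by ring)
    simp only [smul_eq_mul, mul_zero, add_zero, Real.exp_zero, mul_one] at hconv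
    have h1 : (1 - ε) * (-1) = ε - 1 := by ring
    rw [h1] at hconv
    have he : Real.exp (-1) = 1 / Real.exp 1 := by
      rw [Real.exp_neg]; ring
    rw [he] at hconv
    nlinarith [Real.exp_pos (1:ℝ), one_div_pos.mpr (Real.exp_pos 1)]
end

section
/- Let ε > 0 and let u be a natural number such that ⌈(1+ε)^u⌉ ≥ 1/ε. Then ⌈(1+ε)^u⌉ / ⌈(1+ε)^{u+1}⌉ ≥ 1/(1 + 2ε). -/
/-- Let `ε > 0` and `u` a natural number with `⌈(1+ε)^u⌉ ≥ 1/ε`.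
Then `⌈(1+ε)^u⌉ / ⌈(1+ε)^(u+1)⌉ ≥ 1/(1 + 2ε)`. -/
theorem stmt13 (ε : ℝ) (hε : 0 < ε) (u : ℕ)
    (h : 1 / ε ≤ (⌈(1 + ε) ^ u⌉₊ : ℝ)) :
    1 / (1 + 2 * ε) ≤ (⌈(1 + ε) ^ u⌉₊ : ℝ) / (⌈(1 + ε) ^ (u + 1)⌉₊ : ℝ) := by
  set a : ℝ := (⌈(1 + ε) ^ u⌉₊ : ℝ) with ha
  set b : ℝ := (⌈(1 + ε) ^ (u + 1)⌉₊ : ℝ) with hb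
  have hpow : (0:ℝ) < (1 + ε) ^ u := by positivity
  have hpow1 : (0:ℝ) < (1 + ε) ^ (u + 1) := by positivity
  have hbpos : 0 < b := by
    rw [hb]
    exact_mod_cast Nat.ceil_pos.mpr hpow1
  have h1 : 1 ≤ ε * a := by
    have := (div_le_iff₀ hε).mp h
    linarith [this]
  have hle : a ≥ (1 + ε) ^ u := Nat.le_ceil _
  have hblt : b < (1 + ε) ^ (u + 1) + 1 := by
    rw [hb]
    exact Nat.ceil_lt_add_one (le_of_lt hpow1)
  have key : b ≤ (1 + 2 * ε) * a := by
    have h2 : (1 + ε) ^ (u + 1) ≤ (1 + ε) * a := by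
      rw [pow_succ]
      nlinarith
    nlinarith
  rw [div_le_div_iff₀ (by linarith) hbpos]
  nlinarith
end

section
/- Let N be a finite ground set, let f : 2^N → ℝ be monotone with f(∅) ≥ 0, let τ ≥ 0 and ε ∈ (0, 1). Suppose ∅ = U_0 ⊆ U_1 ⊆ … ⊆ U_r = S is a chain of subsets of N such that for each 1 ≤ j ≤ r, writing B_j = U_j \ U_{j−1}, either (i) f(U_j) − f(U_{j−1}) ≥ (1 − ε)·τ·|B_j|, or (ii) there exists D_j ⊆ B_j with |D_j| ≥ |B_j|/(1 + 2ε) and f(U_{j−1} ∪ D_j) − f(U_{j−1}) ≥ (1 − ε)·τ·|D_j|. Then f(S) ≥ (1 − ε)·τ·|S| / (1 + 2ε). -/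
/-- Let `f` be monotone with `f ∅ ≥ 0`, `τ ≥ 0`, `ε ∈ (0,1)`, and
`∅ = U 0 ⊆ U 1 ⊆ … ⊆ U r = S` a chain such that for each step, with block
`B = U (j+1) \ U j`, either the whole block has gain at least `(1−ε)·τ·|B|`, or some
`D ⊆ B` with `|D| ≥ |B|/(1+2ε)` has gain at least `(1−ε)·τ·|D|` over `U j`.
Then `f(S) ≥ (1−ε)·τ·|S|/(1+2ε)`. -/
theorem stmt14 {α : Type*} [DecidableEq α] (f : Finset α → ℝ)
    (hmono : ∀ A B : Finset α, A ⊆ B → f A ≤ f B) (hf0 : 0 ≤ f ∅)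
    (τ : ℝ) (hτ : 0 ≤ τ) (ε : ℝ) (hε : 0 < ε) (hε1 : ε < 1)
    (r : ℕ) (U : ℕ → Finset α) (hU0 : U 0 = ∅)
    (hchain : ∀ j < r, U j ⊆ U (j + 1))
    (hblock : ∀ j < r,
      (1 - ε) * τ * ((U (j + 1) \ U j).card : ℝ) ≤ f (U (j + 1)) - f (U j) ∨
      ∃ D ⊆ U (j + 1) \ U j,
        ((U (j + 1) \ U j).card : ℝ) / (1 + 2 * ε) ≤ (D.card : ℝ) ∧
        (1 - ε) * τ * (D.card : ℝ) ≤ f (U j ∪ D) - f (U j)) :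
    (1 - ε) * τ * ((U r).card : ℝ) / (1 + 2 * ε) ≤ f (U r) := by
  have hpos : (0:ℝ) < 1 + 2 * ε := by linarith
  have hc : 0 ≤ (1 - ε) * τ := mul_nonneg (by linarith) hτ
  induction r with
  | zero =>
    rw [hU0]
    simpa using hf0
  | succ r ih =>
    have ih' := ih (fun j hj => hchain j (Nat.lt_succ_of_lt hj))
      (fun j hj => hblock j (Nat.lt_succ_of_lt hj))
    have hsub : U r ⊆ U (r + 1) := hchain r (Nat.lt_succ_self r)
    have hcard : ((U (r+1)).card : ℝ) = ((U (r+1) \ U r).card : ℝ) + (U r).card := by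
      rw [← Nat.cast_add, Finset.card_sdiff_add_card_eq_card hsub]
    set B : ℝ := ((U (r+1) \ U r).card : ℝ) with hB
    have hBnn : 0 ≤ B := Nat.cast_nonneg _
    -- it suffices to show the step gain
    have hstep : (1 - ε) * τ * B / (1 + 2 * ε) ≤ f (U (r+1)) - f (U r) := by
      rcases hblock r (Nat.lt_succ_self r) with h | ⟨D, hD, hDcard, hDgain⟩
      · calc (1 - ε) * τ * B / (1 + 2 * ε) ≤ (1 - ε) * τ * B := by
              rw [div_le_iff₀ hpos]
              nlinarith [mul_nonneg hc hBnn]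
          _ ≤ _ := h
      · have h1 : (1 - ε) * τ * (B / (1 + 2 * ε)) ≤ (1 - ε) * τ * (D.card : ℝ) :=
          mul_le_mul_of_nonneg_left hDcard hc
        have h2 : f (U r ∪ D) ≤ f (U (r+1)) := by
          apply hmono
          exact Finset.union_subset hsub (hD.trans Finset.sdiff_subset)
        calc (1 - ε) * τ * B / (1 + 2 * ε) = (1 - ε) * τ * (B / (1 + 2 * ε)) := by ring
          _ ≤ (1 - ε) * τ * (D.card : ℝ) := h1
          _ ≤ f (U r ∪ D) - f (U r) := hDgain
          _ ≤ f (U (r+1)) - f (U r) := by linarith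
    have : (1 - ε) * τ * ((U (r+1)).card : ℝ) / (1 + 2 * ε)
        = (1 - ε) * τ * B / (1 + 2 * ε) + (1 - ε) * τ * ((U r).card : ℝ) / (1 + 2 * ε) := by
      rw [hcard]; ring
    linarith
end
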